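/- Let t be an SL₂-tiling having at least one entry equal to 1. Then the entries equal to 1 occur on a zig-zag: there exist a nonempty order-connected set K ⊆ ℤ (an interval of integers, bounded or unbounded on each side) and functions b, v : K → ℤ such that: (i) for all integers i, j, one has t(i,j) = 1 if and only if (i,j) = (b(k), v(k)) for some k ∈ K; (ii) for each k ∈ K with k+1 ∈ K, exactly one of the following two options holds: (a) b(k+1) < b(k) and v(k+1) = v(k), or (b) b(k+1) = b(k) and v(k+1) > v(k); (iii) if K is unbounded above, then for every k₀ ∈ K there exist k ≥ k₀ and k' ≥ k₀ in K with k+1, k'+1 ∈ K such that option (a) holds at k and option (b) holds at k'; (iv) symmetrically, if K is unbounded below, then for every k₀ ∈ K there exist k ≤ k₀ and k' ≤ k₀ in K with k+1, k'+1 ∈ K such that option (a) holds at k and option (b) holds at k'. -/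

import Mathlib

/-- An `SL₂`-tiling: all entries are `≥ 1` and every adjacent `2×2` minor is `1`. -/
def IsSL2Tiling (t : ℤ → ℤ → ℤ) : Prop :=
  (∀ i j, 1 ≤ t i j) ∧
  (∀ i j, t i j * t (i+1) (j+1) - t i (j+1) * t (i+1) j = 1)

namespace SL2Dev

variable {t : ℤ → ℤ → ℤ}

lemma rowrec (hpos : ∀ i j, 1 ≤ t i j)
    (hdet : ∀ i j, t i j * t (i+1) (j+1) - t i (j+1) * t (i+1) j = 1) (r : ℤ) :
    ∃ β, ∀ c, t (r-1) c + t (r+1) c = β * t r c := by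
  have cross : ∀ c, (t (r-1) c + t (r+1) c) * t r (c+1)
      = (t (r-1) (c+1) + t (r+1) (c+1)) * t r c := by
    intro c
    have h1 := hdet (r-1) c
    have h2 := hdet r c
    have hr : r - 1 + 1 = r := by ring
    rw [hr] at h1
    linear_combination h1 - h2
  have key : ∀ c, (t (r-1) c + t (r+1) c) * t r 0 = (t (r-1) 0 + t (r+1) 0) * t r c := by
    intro c
    induction c using Int.induction_on with
    | zero => ring
    | succ k ih =>
      have hc := cross k
      have hne : t r k ≠ 0 := by have := hpos r k; omega
      have h3 : t r k * ((t (r-1) (k+1) + t (r+1) (k+1)) * t r 0)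
          = t r k * ((t (r-1) 0 + t (r+1) 0) * t r (k+1)) := by
        linear_combination (t r (k+1)) * ih - (t r 0) * hc
      exact mul_left_cancel₀ hne h3
    | pred k ih =>
      have hc := cross (-(k:ℤ)-1)
      have hs : -(k:ℤ) - 1 + 1 = -(k:ℤ) := by ring
      rw [hs] at hc
      have hne : t r (-(k:ℤ)) ≠ 0 := by have := hpos r (-(k:ℤ)); omega
      have h3 : t r (-(k:ℤ)) * ((t (r-1) (-(k:ℤ)-1) + t (r+1) (-(k:ℤ)-1)) * t r 0)
          = t r (-(k:ℤ)) * ((t (r-1) 0 + t (r+1) 0) * t r (-(k:ℤ)-1)) := by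
        linear_combination (t r (-(k:ℤ)-1)) * ih + (t r 0) * hc
      exact mul_left_cancel₀ hne h3
  have h2 := hdet r 0
  refine ⟨(t (r-1) 0 + t (r+1) 0) * t (r+1) 1 - (t (r-1) 1 + t (r+1) 1) * t (r+1) 0, fun c => ?_⟩
  have hk := key c
  have hk1 := key 1
  have hne : t r 0 ≠ 0 := by have := hpos r 0; omega
  norm_num at h2
  apply mul_right_cancel₀ hne
  linear_combination hk - (t r c * (t (r-1) 0 + t (r+1) 0)) * h2 + (t r c * t (r+1) 0) * hk1


lemma genE (hpos : ∀ i j, 1 ≤ t i j)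
    (hdet : ∀ i j, t i j * t (i+1) (j+1) - t i (j+1) * t (i+1) j = 1)
    {r r' : ℤ} (c : ℤ) (h : r < r') :
    1 ≤ t r c * t r' (c+1) - t r (c+1) * t r' c := by
  obtain ⟨n, rfl⟩ : ∃ n : ℕ, r' = r + 1 + n := ⟨(r' - (r+1)).toNat, by omega⟩
  clear h
  set E : ℤ → ℤ := fun m => t r c * t m (c+1) - t r (c+1) * t m c with hE
  have claim : ∀ n : ℕ, 1 ≤ E (r + n + 1) ∧
      E (r + n + 1) * t (r + n) c - E (r + n) * t (r + n + 1) c = t r c := by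
    intro n
    induction n with
    | zero =>
      have h0 := hdet r c
      constructor
      · simp only [hE]
        push_cast
        ring_nf
        ring_nf at h0
        linarith
      · simp only [hE]
        push_cast
        ring_nf
        ring_nf at h0
        linear_combination (t r c) * h0
    | succ n ih =>
      obtain ⟨h1, h2⟩ := ih
      obtain ⟨β, hβ⟩ := rowrec hpos hdet (r + n + 1)
      have hβ1 := hβ c
      have hβ2 := hβ (c+1)
      have hs : r + (n:ℤ) + 1 - 1 = r + n := by ring
      rw [hs] at hβ1 hβ2
      have hEn2 : E (r + n + 1 + 1) = β * E (r + n + 1) - E (r + n) := by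
        simp only [hE]
        linear_combination (t r c) * hβ2 - (t r (c+1)) * hβ1
      have hW : E (r + n + 1 + 1) * t (r + n + 1) c - E (r + n + 1) * t (r + n + 1 + 1) c
          = t r c := by
        rw [hEn2]
        linear_combination h2 - (E (r + n + 1)) * hβ1
      have hpos2 : 1 ≤ E (r + n + 1 + 1) := by
        have p1 := hpos (r + n + 1) c
        have p2 := hpos (r + n + 1 + 1) c
        have p3 := hpos r c
        nlinarith [h1, hW]
      have hc1 : r + ((n:ℤ)+1) + 1 = r + n + 1 + 1 := by ring
      have hc2 : r + ((n:ℤ)+1) = r + n + 1 := by ring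
      constructor
      · push_cast
        rw [hc1]
        exact hpos2
      · push_cast
        rw [hc1, hc2]
        exact hW
  have := (claim n).1
  have hc3 : r + (n:ℤ) + 1 = r + 1 + n := by ring
  rw [hc3] at this
  simpa only [hE] using this


lemma genF (hpos : ∀ i j, 1 ≤ t i j)
    (hdet : ∀ i j, t i j * t (i+1) (j+1) - t i (j+1) * t (i+1) j = 1)
    (r : ℤ) {c c' : ℤ} (h : c < c') :
    1 ≤ t r c * t (r+1) c' - t r c' * t (r+1) c := by
  have hdet' : ∀ i j, (fun i j => t j i) i j * (fun i j => t j i) (i+1) (j+1)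
      - (fun i j => t j i) i (j+1) * (fun i j => t j i) (i+1) j = 1 := by
    intro i j
    simp only
    linear_combination hdet j i
  have := genE (t := fun i j => t j i) (fun i j => hpos j i) hdet' r h
  linarith

lemma CC (hpos : ∀ i j, 1 ≤ t i j)
    (hdet : ∀ i j, t i j * t (i+1) (j+1) - t i (j+1) * t (i+1) j = 1)
    (j c : ℤ) : ∀ r, t r c = (t 0 c * t 1 (j+1) - t 0 (j+1) * t 1 c) * t r j
      + (t 0 j * t 1 c - t 0 c * t 1 j) * t r (j+1) := by
  have hD := hdet 0 j
  norm_num at hD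
  suffices H : ∀ r : ℤ, (t r c = (t 0 c * t 1 (j+1) - t 0 (j+1) * t 1 c) * t r j
      + (t 0 j * t 1 c - t 0 c * t 1 j) * t r (j+1)) ∧
      (t (r+1) c = (t 0 c * t 1 (j+1) - t 0 (j+1) * t 1 c) * t (r+1) j
      + (t 0 j * t 1 c - t 0 c * t 1 j) * t (r+1) (j+1)) by
    exact fun r => (H r).1
  intro r
  induction r using Int.induction_on with
  | zero =>
    norm_num
    constructor
    · linear_combination (-(t 0 c)) * hD
    · linear_combination (-(t 1 c)) * hD
  | succ k ih =>
    obtain ⟨ih1, ih2⟩ := ih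
    refine ⟨ih2, ?_⟩
    obtain ⟨β, hβ⟩ := rowrec hpos hdet ((k:ℤ)+1)
    have hs : (k:ℤ) + 1 - 1 = k := by ring
    rw [hs] at hβ
    have hβc := hβ c
    have hβj := hβ j
    have hβj1 := hβ (j+1)
    linear_combination hβc - (t 0 c * t 1 (j+1) - t 0 (j+1) * t 1 c) * hβj
      - (t 0 j * t 1 c - t 0 c * t 1 j) * hβj1 + β * ih2 - ih1
  | pred k ih =>
    obtain ⟨ih1, ih2⟩ := ih
    have hn1 : (-(k:ℤ) - 1 + 1) = -(k:ℤ) := by ring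
    rw [hn1]
    refine ⟨?_, ih1⟩
    obtain ⟨β, hβ⟩ := rowrec hpos hdet (-(k:ℤ))
    have hs : -(k:ℤ) - 1 = -(k:ℤ) - 1 := rfl
    have hβc := hβ c
    have hβj := hβ j
    have hβj1 := hβ (j+1)
    have hs2 : -(k:ℤ) + 1 = -(k:ℤ) + 1 := rfl
    linear_combination hβc - (t 0 c * t 1 (j+1) - t 0 (j+1) * t 1 c) * hβj
      - (t 0 j * t 1 c - t 0 c * t 1 j) * hβj1 + β * ih1 - ih2

lemma minor_pos (hpos : ∀ i j, 1 ≤ t i j)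
    (hdet : ∀ i j, t i j * t (i+1) (j+1) - t i (j+1) * t (i+1) j = 1)
    {r r' c c' : ℤ} (hr : r < r') (hc : c < c') :
    1 ≤ t r c * t r' c' - t r c' * t r' c := by
  have hQ := genF hpos hdet 0 hc
  norm_num at hQ
  have hE := genE hpos hdet (r := r) (r' := r') c hr
  have h1 := CC hpos hdet c c' r
  have h2 := CC hpos hdet c c' r'
  have hfact : t r c * t r' c' - t r c' * t r' c
      = (t 0 c * t 1 c' - t 0 c' * t 1 c) * (t r c * t r' (c+1) - t r (c+1) * t r' c) := by
    linear_combination (t r c) * h2 - (t r' c) * h1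
  rw [hfact]
  nlinarith [hQ, hE]


def d2 (u v : ℤ × ℤ) : ℤ := u.1 * v.2 - v.1 * u.2

lemma fan (V : ℤ → ℤ × ℤ) (n : ℤ) (hn : 2 ≤ n) (h0 : V 0 = (1,0)) (hN : V n = (0,1))
    (hint : ∀ x, 0 < x → x < n → 1 ≤ (V x).1 ∧ 1 ≤ (V x).2)
    (hd : ∀ x, 0 ≤ x → x < n → (V x).1 * (V (x+1)).2 - (V (x+1)).1 * (V x).2 = 1) :
    ∃ x, 0 < x ∧ x < n ∧ (V x).1 = 1 ∧ (V x).2 = 1 := by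
  classical
  set F := (Finset.Ico (0:ℤ) n).filter (fun x => (V x).2 ≤ (V x).1) with hF
  have h0F : (0:ℤ) ∈ F := by
    simp [hF, h0]
    omega
  set x := F.max' ⟨0, h0F⟩ with hx
  have hxF : x ∈ F := F.max'_mem _
  simp only [hF, Finset.mem_filter, Finset.mem_Ico] at hxF
  obtain ⟨⟨hx0, hxn⟩, hxba⟩ := hxF
  have hxmax : ∀ y ∈ F, y ≤ x := fun y hy => F.le_max' y hy
  have hxpos : 0 < x := by
    rcases lt_or_eq_of_le hx0 with h | h
    · exact h
    exfalso
    have h1n : (1:ℤ) < n := by omega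
    have h1F : (1:ℤ) ∉ F := by
      intro hmem
      have := hxmax 1 hmem
      omega
    have hd0 := hd 0 (le_refl 0) (by omega)
    rw [h0] at hd0
    simp at hd0
    have hi := hint 1 (by omega) h1n
    have : ¬ ((V 1).2 ≤ (V 1).1) := by
      intro hle
      apply h1F
      simp [hF]
      omega
    omega
  have hxint := hint x hxpos hxn
  -- properties of x+1
  have hnext : 0 ≤ (V (x+1)).1 ∧ (V (x+1)).1 + 1 ≤ (V (x+1)).2 := by
    rcases eq_or_lt_of_le (show x + 1 ≤ n by omega) with h | h
    · rw [h, hN]; norm_num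
    · have hi := hint (x+1) (by omega) h
      have : (x+1) ∉ F := by
        intro hmem
        have := hxmax _ hmem
        omega
      simp [hF] at this
      have := this (by omega) (by omega)
      omega
  have hdx := hd x (by omega) hxn
  set a := (V x).1
  set b := (V x).2
  set a' := (V (x+1)).1
  set b' := (V (x+1)).2
  have hab : b ≤ a := hxba
  have h1b : 1 ≤ b := hxint.2
  have key : a + a' * (a - b) ≤ 1 := by nlinarith
  have ha1 : a = 1 := by nlinarith [mul_nonneg hnext.1 (show (0:ℤ) ≤ a - b by omega)]
  exact ⟨x, hxpos, hxn, ha1, by omega⟩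


lemma plucker (a b c d : ℤ × ℤ) :
    d2 b d * d2 a c - d2 c d * d2 a b = d2 a d * d2 b c := by
  simp only [d2]; ring

lemma third_one (hpos : ∀ i j, 1 ≤ t i j)
    (hdet : ∀ i j, t i j * t (i+1) (j+1) - t i (j+1) * t (i+1) j = 1)
    {i j p q : ℤ} (hpi : p < i) (hjq : j < q) (hP : t i j = 1) (hQ : t p q = 1) :
    ∃ r c, t r c = 1 ∧ p ≤ r ∧ r ≤ i ∧ j ≤ c ∧ c ≤ q ∧ ¬(r = i ∧ c = j) ∧ ¬(r = p ∧ c = q) := by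
  classical
  set X : ℤ → ℤ × ℤ := fun s => (t s j, t s (j+1)) with hXdef
  set Z : ℤ → ℤ × ℤ := fun c => (-(t 0 j * t 1 c - t 0 c * t 1 j),
      t 0 c * t 1 (j+1) - t 0 (j+1) * t 1 c) with hZdef
  have hXZ : ∀ s c, d2 (X s) (Z c) = t s c := by
    intro s c
    have := CC hpos hdet j c s
    simp only [hXdef, hZdef, d2]
    linear_combination -this
  have hZZ : ∀ c c', d2 (Z c) (Z c') = t 0 c * t 1 c' - t 0 c' * t 1 c := by
    intro c c'
    have hD := hdet 0 j
    norm_num at hD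
    simp only [hZdef, d2]
    linear_combination (t 0 c * t 1 c' - t 0 c' * t 1 c) * hD
  have hXX : ∀ s, d2 (X s) (X (s+1)) = 1 := by
    intro s
    simp only [hXdef, d2]
    linear_combination hdet s j
  set n : ℤ := (i - p) + (q - j) + 1 with hn
  set W : ℤ → ℤ × ℤ := fun x => if x ≤ i - p then X (p + x) else Z (j + x - (i-p) - 1) with hWdef
  set V : ℤ → ℤ × ℤ := fun x => (d2 (W x) (Z q), d2 (X p) (W x)) with hVdef
  have hW0 : W 0 = X p := by simp [hWdef]; omega
  have hWn : W n = Z q := by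
    have : ¬ (n ≤ i - p) := by omega
    simp only [hWdef, this, if_false]
    congr 1
    omega
  have hXZq : d2 (X p) (Z q) = 1 := by rw [hXZ]; exact hQ
  have hcons : ∀ x, 0 ≤ x → x < n → d2 (W x) (W (x+1)) = 1 := by
    intro x hx0 hxn
    by_cases h1 : x + 1 ≤ i - p
    · have h2 : x ≤ i - p := by omega
      simp only [hWdef, if_pos h1, if_pos h2]
      have : p + (x + 1) = (p + x) + 1 := by ring
      rw [this]
      exact hXX (p + x)
    · by_cases h2 : x ≤ i - p
      · -- junction : x = i - p
        have hxe : x = i - p := by omega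
        simp only [hWdef, if_pos h2, if_neg h1]
        have e1 : p + x = i := by omega
        have e2 : j + (x+1) - (i-p) - 1 = j := by omega
        rw [e1, e2, hXZ]
        exact hP
      · have h3 : ¬ (x + 1 ≤ i - p) := by omega
        simp only [hWdef, if_neg h2, if_neg h3]
        have e2 : j + (x+1) - (i-p) - 1 = (j + x - (i-p) - 1) + 1 := by ring
        rw [e2, hZZ]
        have h4 := hdet 0 (j + x - (i-p) - 1)
        norm_num at h4
        have e3 : j + x - (i-p) - 1 + 1 = j + x - (i-p) := by ring
        rw [e3]
        exact h4
  have main := fan V n (by omega) ?_ ?_ ?_ ?_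
  · obtain ⟨x, hx0, hxn, hV1, hV2⟩ := main
    by_cases h2 : x ≤ i - p
    · refine ⟨p + x, q, ?_, by omega, by omega, by omega, le_refl q, ?_, ?_⟩
      · have : d2 (W x) (Z q) = t (p+x) q := by
          simp only [hWdef, if_pos h2]; exact hXZ _ _
        simp only [hVdef] at hV1
        rw [this] at hV1
        exact hV1
      · rintro ⟨-, hc⟩; omega
      · rintro ⟨hr, -⟩; omega
    · set c := j + x - (i-p) - 1 with hc
      refine ⟨p, c, ?_, le_refl p, by omega, by omega, by omega, ?_, ?_⟩
      · have : d2 (X p) (W x) = t p c := by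
          simp only [hWdef, if_neg h2]; exact hXZ _ _
        simp only [hVdef] at hV2
        rw [this] at hV2
        exact hV2
      · rintro ⟨hr, -⟩; omega
      · rintro ⟨-, hcq⟩; omega
  · simp only [hVdef, hW0, hXZq]
    have : d2 (X p) (X p) = 0 := by simp [d2]
    rw [this]
  · simp only [hVdef, hWn, hXZq]
    have : d2 (Z q) (Z q) = 0 := by simp [d2]
    rw [this]
  · intro x hx0 hxn
    by_cases h2 : x ≤ i - p
    · constructor
      · simp only [hVdef, hWdef, if_pos h2, hXZ]
        exact hpos _ _
      · simp only [hVdef, hWdef, if_pos h2]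
        have := genE hpos hdet (r := p) (r' := p + x) j (by omega)
        simp only [hXdef, d2]
        linarith
    · constructor
      · simp only [hVdef, hWdef, if_neg h2, hZZ]
        exact genF hpos hdet 0 (by omega)
      · simp only [hVdef, hWdef, if_neg h2, hXZ]
        exact hpos _ _
  · intro x hx0 hxn
    have hkey := hcons x hx0 hxn
    simp only [hVdef]
    have hpl := plucker (X p) (W x) (W (x+1)) (Z q)
    rw [hkey, hXZq] at hpl
    linarith [hpl]


lemma chain (hpos : ∀ i j, 1 ≤ t i j)
    (hdet : ∀ i j, t i j * t (i+1) (j+1) - t i (j+1) * t (i+1) j = 1)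
    {a b c d : ℤ} (h1 : t a b = 1) (h2 : t c d = 1) : ¬(a < c ∧ b < d) := by
  rintro ⟨hac, hbd⟩
  have := minor_pos hpos hdet hac hbd
  rw [h1, h2] at this
  nlinarith [hpos a d, hpos c b]

def zle (s u : ℤ × ℤ) : Prop := u.1 ≤ s.1 ∧ s.2 ≤ u.2

lemma zle_refl (s : ℤ × ℤ) : zle s s := ⟨le_refl _, le_refl _⟩

lemma zle_trans {s u w : ℤ × ℤ} (h1 : zle s u) (h2 : zle u w) : zle s w := by
  obtain ⟨a,b⟩ := h1; obtain ⟨c,d⟩ := h2; exact ⟨le_trans c a, le_trans b d⟩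

lemma zle_antisymm {s u : ℤ × ℤ} (h1 : zle s u) (h2 : zle u s) : s = u := by
  obtain ⟨a,b⟩ := h1; obtain ⟨c,d⟩ := h2
  have : s.1 = u.1 := le_antisymm c a
  have : s.2 = u.2 := le_antisymm b d
  exact Prod.ext (by omega) (by omega)

lemma total (hpos : ∀ i j, 1 ≤ t i j)
    (hdet : ∀ i j, t i j * t (i+1) (j+1) - t i (j+1) * t (i+1) j = 1)
    {s u : ℤ × ℤ} (h1 : t s.1 s.2 = 1) (h2 : t u.1 u.2 = 1) : zle s u ∨ zle u s := by
  have c1 := chain hpos hdet h1 h2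
  have c2 := chain hpos hdet h2 h1
  simp only [zle]
  omega

def Btw (t : ℤ → ℤ → ℤ) (s u : ℤ × ℤ) : Set (ℤ × ℤ) :=
  {w | t w.1 w.2 = 1 ∧ zle s w ∧ zle w u ∧ w ≠ s}

lemma btw_finite (t : ℤ → ℤ → ℤ) (s u : ℤ × ℤ) : (Btw t s u).Finite := by
  apply Set.Finite.subset ((Set.finite_Icc u.1 s.1).prod (Set.finite_Icc s.2 u.2))
  rintro ⟨w1, w2⟩ ⟨-, ⟨a,b⟩, ⟨c,d⟩, -⟩
  exact ⟨⟨c, a⟩, ⟨b, d⟩⟩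

noncomputable def cnt (t : ℤ → ℤ → ℤ) (s u : ℤ × ℤ) : ℕ := (Btw t s u).ncard

noncomputable def idx (t : ℤ → ℤ → ℤ) (s₀ s : ℤ × ℤ) : ℤ :=
  (cnt t s₀ s : ℤ) - (cnt t s s₀ : ℤ)

lemma btw_empty {t : ℤ → ℤ → ℤ} {s u : ℤ × ℤ} (h : ¬(zle s u ∧ s ≠ u)) : cnt t s u = 0 := by
  have : Btw t s u = ∅ := by
    ext w
    simp only [Btw, Set.mem_setOf_eq, Set.mem_empty_iff_false, iff_false]
    rintro ⟨-, hsw, hwu, hws⟩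
    apply h
    refine ⟨zle_trans hsw hwu, ?_⟩
    rintro rfl
    exact hws (zle_antisymm hwu hsw)
  simp [cnt, this]

lemma cnt_pos {t : ℤ → ℤ → ℤ} {s u : ℤ × ℤ} (hu : t u.1 u.2 = 1) (hsu : zle s u)
    (hne : u ≠ s) : 1 ≤ cnt t s u := by
  have : u ∈ Btw t s u := ⟨hu, hsu, zle_refl u, hne⟩
  have hpos := (Set.ncard_pos (btw_finite t s u)).mpr ⟨u, this⟩
  show 1 ≤ (Btw t s u).ncard
  exact hpos

lemma cnt_add (hpos : ∀ i j, 1 ≤ t i j)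
    (hdet : ∀ i j, t i j * t (i+1) (j+1) - t i (j+1) * t (i+1) j = 1)
    {s u w : ℤ × ℤ} (hu : t u.1 u.2 = 1) (hsu : zle s u) (huw : zle u w) :
    cnt t s w = cnt t s u + cnt t u w := by
  have hsplit : Btw t s w = Btw t s u ∪ Btw t u w := by
    ext w'
    simp only [Btw, Set.mem_setOf_eq, Set.mem_union]
    constructor
    · rintro ⟨h1, hsw', hw'w, hne⟩
      by_cases he : w' = u
      · subst he
        exact Or.inl ⟨h1, hsw', zle_refl _, hne⟩
      · rcases total hpos hdet h1 hu with h | h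
        · exact Or.inl ⟨h1, hsw', h, hne⟩
        · exact Or.inr ⟨h1, h, hw'w, he⟩
    · rintro (⟨h1, hsw', hw'u, hne⟩ | ⟨h1, huw', hw'w, hne⟩)
      · exact ⟨h1, hsw', zle_trans hw'u huw, hne⟩
      · refine ⟨h1, zle_trans hsu huw', hw'w, ?_⟩
        rintro rfl
        exact hne (zle_antisymm hsu huw')
  have hdisj : Disjoint (Btw t s u) (Btw t u w) := by
    rw [Set.disjoint_left]
    rintro w' ⟨-, -, hw'u, -⟩ ⟨-, huw', -, hne⟩
    exact hne (zle_antisymm hw'u huw')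
  rw [cnt, hsplit, Set.ncard_union_eq hdisj (btw_finite t s u) (btw_finite t u w)]
  rfl

lemma idx_mono (hpos : ∀ i j, 1 ≤ t i j)
    (hdet : ∀ i j, t i j * t (i+1) (j+1) - t i (j+1) * t (i+1) j = 1)
    {s₀ s u : ℤ × ℤ} (h0 : t s₀.1 s₀.2 = 1) (hs : t s.1 s.2 = 1) (hu : t u.1 u.2 = 1)
    (hsu : zle s u) : idx t s₀ u = idx t s₀ s + cnt t s u := by
  rcases total hpos hdet h0 hs with h | h
  · -- zle s₀ s
    have h0u : zle s₀ u := zle_trans h hsu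
    have e1 : cnt t s s₀ = 0 := btw_empty (by
      rintro ⟨h1, h2⟩; exact h2 (zle_antisymm h1 h))
    have e2 : cnt t u s₀ = 0 := btw_empty (by
      rintro ⟨h1, h2⟩; exact h2 (zle_antisymm h1 h0u))
    have e3 := cnt_add hpos hdet hs h hsu
    simp only [idx, e1, e2, e3]
    push_cast
    ring
  · -- zle s s₀
    rcases total hpos hdet h0 hu with h' | h'
    · -- zle s₀ u
      have e1 : cnt t s₀ s = 0 := btw_empty (by
        rintro ⟨h1, h2⟩; exact h2 (zle_antisymm h1 h))
      have e2 : cnt t u s₀ = 0 := btw_empty (by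
        rintro ⟨h1, h2⟩; exact h2 (zle_antisymm h1 h'))
      have e3 := cnt_add hpos hdet h0 h h'
      simp only [idx, e1, e2, e3]
      push_cast
      ring
    · -- zle u s₀
      have e1 : cnt t s₀ s = 0 := btw_empty (by
        rintro ⟨h1, h2⟩; exact h2 (zle_antisymm h1 h))
      have e2 : cnt t s₀ u = 0 := btw_empty (by
        rintro ⟨h1, h2⟩; exact h2 (zle_antisymm h1 h'))
      have e3 := cnt_add hpos hdet hu hsu h'
      simp only [idx, e1, e2, e3]
      push_cast
      ring

lemma idx_strict (hpos : ∀ i j, 1 ≤ t i j)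
    (hdet : ∀ i j, t i j * t (i+1) (j+1) - t i (j+1) * t (i+1) j = 1)
    {s₀ s u : ℤ × ℤ} (h0 : t s₀.1 s₀.2 = 1) (hs : t s.1 s.2 = 1) (hu : t u.1 u.2 = 1)
    (hsu : zle s u) (hne : s ≠ u) : idx t s₀ s < idx t s₀ u := by
  have := idx_mono hpos hdet h0 hs hu hsu
  have hc := cnt_pos hu hsu (Ne.symm hne)
  omega

lemma idx_inj (hpos : ∀ i j, 1 ≤ t i j)
    (hdet : ∀ i j, t i j * t (i+1) (j+1) - t i (j+1) * t (i+1) j = 1)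
    {s₀ s u : ℤ × ℤ} (h0 : t s₀.1 s₀.2 = 1) (hs : t s.1 s.2 = 1) (hu : t u.1 u.2 = 1)
    (heq : idx t s₀ s = idx t s₀ u) : s = u := by
  by_contra hne
  rcases total hpos hdet hs hu with h | h
  · have := idx_strict hpos hdet h0 hs hu h hne
    omega
  · have := idx_strict hpos hdet h0 hu hs h (Ne.symm hne)
    omega


open Classical in
noncomputable def sel (t : ℤ → ℤ → ℤ) (s₀ : ℤ × ℤ) (k : ℤ) : ℤ × ℤ :=
  if h : ∃ s : ℤ × ℤ, t s.1 s.2 = 1 ∧ idx t s₀ s = k then h.choose else s₀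

lemma sel_spec {t : ℤ → ℤ → ℤ} {s₀ : ℤ × ℤ} (k : ℤ)
    (h : ∃ s : ℤ × ℤ, t s.1 s.2 = 1 ∧ idx t s₀ s = k) :
    t (sel t s₀ k).1 (sel t s₀ k).2 = 1 ∧ idx t s₀ (sel t s₀ k) = k := by
  classical
  rw [sel, dif_pos h]
  exact h.choose_spec

lemma sel_idx (hpos : ∀ i j, 1 ≤ t i j)
    (hdet : ∀ i j, t i j * t (i+1) (j+1) - t i (j+1) * t (i+1) j = 1)
    {s₀ s : ℤ × ℤ} (h0 : t s₀.1 s₀.2 = 1) (hs : t s.1 s.2 = 1) :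
    sel t s₀ (idx t s₀ s) = s := by
  have hex : ∃ u : ℤ × ℤ, t u.1 u.2 = 1 ∧ idx t s₀ u = idx t s₀ s := ⟨s, hs, rfl⟩
  have := sel_spec _ hex
  exact idx_inj hpos hdet h0 this.1 hs this.2

end SL2Dev

open SL2Dev

theorem ones_on_zigzag (t : ℤ → ℤ → ℤ) (ht : IsSL2Tiling t)
    (hone : ∃ i j : ℤ, t i j = 1) :
    ∃ (K : Set ℤ) (b v : ℤ → ℤ),
      K.Nonempty ∧ K.OrdConnected ∧
      -- (i) the entries equal to 1 are exactly those indexed by K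
      (∀ i j : ℤ, t i j = 1 ↔ ∃ k ∈ K, i = b k ∧ j = v k) ∧
      -- (ii) at each step, exactly one of option (a) or option (b) holds
      (∀ k, k ∈ K → k + 1 ∈ K →
        Xor' (b (k+1) < b k ∧ v (k+1) = v k)
             (b (k+1) = b k ∧ v (k+1) > v k)) ∧
      -- (iii) if K is unbounded above, both options occur arbitrarily far right
      (¬ BddAbove K → ∀ k₀ ∈ K,
        (∃ k, k₀ ≤ k ∧ k ∈ K ∧ k + 1 ∈ K ∧ b (k+1) < b k ∧ v (k+1) = v k) ∧
        (∃ k', k₀ ≤ k' ∧ k' ∈ K ∧ k' + 1 ∈ K ∧ b (k'+1) = b k' ∧ v (k'+1) > v k')) ∧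
      -- (iv) if K is unbounded below, both options occur arbitrarily far left
      (¬ BddBelow K → ∀ k₀ ∈ K,
        (∃ k, k ≤ k₀ ∧ k ∈ K ∧ k + 1 ∈ K ∧ b (k+1) < b k ∧ v (k+1) = v k) ∧
        (∃ k', k' ≤ k₀ ∧ k' ∈ K ∧ k' + 1 ∈ K ∧ b (k'+1) = b k' ∧ v (k'+1) > v k')) := by

  classical
  obtain ⟨hpos, hdet⟩ := ht
  obtain ⟨i₀, j₀, h00⟩ := hone
  set s₀ : ℤ × ℤ := (i₀, j₀) with hs₀
  have h0 : t s₀.1 s₀.2 = 1 := h00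
  set K : Set ℤ := {k : ℤ | ∃ s : ℤ × ℤ, t s.1 s.2 = 1 ∧ idx t s₀ s = k} with hK
  set b : ℤ → ℤ := fun k => (sel t s₀ k).1 with hb
  set v : ℤ → ℤ := fun k => (sel t s₀ k).2 with hv
  have hselK : ∀ k, k ∈ K → t (sel t s₀ k).1 (sel t s₀ k).2 = 1 ∧ idx t s₀ (sel t s₀ k) = k :=
    fun k hk => sel_spec k hk
  have hones : ∀ k, k ∈ K → t (b k) (v k) = 1 := fun k hk => (hselK k hk).1
  have hmemK : ∀ s : ℤ × ℤ, t s.1 s.2 = 1 → idx t s₀ s ∈ K := fun s hs => ⟨s, hs, rfl⟩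
  have hzleK : ∀ k k', k ∈ K → k' ∈ K → k ≤ k' → zle (sel t s₀ k) (sel t s₀ k') := by
    intro k k' hk hk' hle
    obtain ⟨hs1, hsk⟩ := hselK k hk
    obtain ⟨hu1, huk⟩ := hselK k' hk'
    rcases total hpos hdet hs1 hu1 with h | h
    · exact h
    · by_cases he : sel t s₀ k' = sel t s₀ k
      · rw [he]; exact zle_refl _
      · have := idx_strict hpos hdet h0 hu1 hs1 h he
        omega
  -- order connectedness
  have hOC : K.OrdConnected := by
    constructor
    intro x hx y hy z hz
    obtain ⟨hxz, hzy⟩ := hz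
    rcases eq_or_lt_of_le hxz with h | h
    · rwa [← h]
    obtain ⟨s, hs1, hsx⟩ := hx
    obtain ⟨u, hu1, huy⟩ := hy
    have hzsu : zle s u := by
      have h1 : sel t s₀ x = s := by rw [← hsx]; exact sel_idx hpos hdet h0 hs1
      have h2 : sel t s₀ y = u := by rw [← huy]; exact sel_idx hpos hdet h0 hu1
      have := hzleK x y ⟨s, hs1, hsx⟩ ⟨u, hu1, huy⟩ (by omega)
      rwa [h1, h2] at this
    have hcnt : (cnt t s u : ℤ) = y - x := by
      have := idx_mono hpos hdet h0 hs1 hu1 hzsu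
      omega
    set F := (btw_finite t s u).toFinset with hF
    have hFcard : F.card = cnt t s u := by
      rw [cnt]
      exact (Set.ncard_eq_toFinset_card _ (btw_finite t s u)).symm
    have himg : F.image (idx t s₀) ⊆ Finset.Ioc x y := by
      intro l hl
      simp only [Finset.mem_image] at hl
      obtain ⟨w, hwF, rfl⟩ := hl
      rw [hF, Set.Finite.mem_toFinset] at hwF
      obtain ⟨hw1, hsw, hwu, hwne⟩ := hwF
      have e1 := idx_mono hpos hdet h0 hs1 hw1 hsw
      have e2 := idx_mono hpos hdet h0 hw1 hu1 hwu
      have e3 := cnt_pos hw1 hsw hwne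
      simp only [Finset.mem_Ioc]
      omega
    have hinj : Set.InjOn (idx t s₀) F := by
      intro w1 hw1 w2 hw2 he
      simp only [hF, Finset.mem_coe, Set.Finite.mem_toFinset] at hw1 hw2
      exact idx_inj hpos hdet h0 hw1.1 hw2.1 he
    have hicard : (Finset.Ioc x y).card = F.card := by
      rw [Int.card_Ioc, hFcard]
      omega
    have heq : F.image (idx t s₀) = Finset.Ioc x y := by
      apply Finset.eq_of_subset_of_card_le himg
      rw [hicard, ← Finset.card_image_of_injOn hinj]
    have hzmem : z ∈ Finset.Ioc x y := by simp only [Finset.mem_Ioc]; omega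
    rw [← heq] at hzmem
    simp only [Finset.mem_image] at hzmem
    obtain ⟨w, hwF, hwz⟩ := hzmem
    rw [hF, Set.Finite.mem_toFinset] at hwF
    exact ⟨w, hwF.1, hwz⟩
  -- the Xor property
  have hxor : ∀ k, k ∈ K → k + 1 ∈ K →
      Xor' (b (k+1) < b k ∧ v (k+1) = v k) (b (k+1) = b k ∧ v (k+1) > v k) := by
    intro k hk hk1
    obtain ⟨hs1, hsk⟩ := hselK k hk
    obtain ⟨hu1, huk⟩ := hselK (k+1) hk1
    set s := sel t s₀ k
    set u := sel t s₀ (k+1)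
    have hzsu : zle s u := hzleK k (k+1) hk hk1 (by omega)
    have hne : s ≠ u := by
      intro he
      rw [he] at hsk
      omega
    have hcnt1 : cnt t s u = 1 := by
      have := idx_mono hpos hdet h0 hs1 hu1 hzsu
      omega
    have hnob : ∀ w : ℤ × ℤ, t w.1 w.2 = 1 → zle s w → zle w u → w = s ∨ w = u := by
      intro w hw1 hsw hwu
      by_contra hcon
      push_neg at hcon
      have hwB : w ∈ Btw t s u := ⟨hw1, hsw, hwu, hcon.1⟩
      have huB : u ∈ Btw t s u := ⟨hu1, hzsu, zle_refl _, Ne.symm hne⟩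
      have : 1 < (Btw t s u).ncard := by
        rw [Set.one_lt_ncard_iff (btw_finite t s u)]
        exact ⟨w, u, hwB, huB, hcon.2⟩
      simp only [cnt] at hcnt1
      omega
    obtain ⟨hu1s, hsu2⟩ := hzsu
    have hnotboth : ¬ (u.1 < s.1 ∧ s.2 < u.2) := by
      rintro ⟨hlt1, hlt2⟩
      obtain ⟨r, c, hrc, hc1, hc2, hc3, hc4, hc5, hc6⟩ :=
        third_one hpos hdet hlt1 hlt2 hs1 hu1
      rcases hnob (r, c) hrc ⟨hc2, hc3⟩ ⟨hc1, hc4⟩ with h | h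
      · apply hc5
        constructor
        · exact congrArg Prod.fst h
        · exact congrArg Prod.snd h
      · apply hc6
        constructor
        · exact congrArg Prod.fst h
        · exact congrArg Prod.snd h
    have hbk : b k = s.1 := rfl
    have hbk1 : b (k+1) = u.1 := rfl
    have hvk : v k = s.2 := rfl
    have hvk1 : v (k+1) = u.2 := rfl
    have hcomp : s.1 ≠ u.1 ∨ s.2 ≠ u.2 := by
      by_contra hcon
      push_neg at hcon
      exact hne (Prod.ext hcon.1 hcon.2)
    rcases lt_or_eq_of_le hu1s with hlt | heq
    · left
      refine ⟨⟨by omega, by omega⟩, ?_⟩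
      rintro ⟨he, -⟩
      omega
    · right
      have hv2 : s.2 < u.2 := by
        rcases lt_or_eq_of_le hsu2 with h | h
        · exact h
        · exfalso; rcases hcomp with h' | h' <;> omega
      refine ⟨⟨by omega, by omega⟩, ?_⟩
      rintro ⟨he, -⟩
      omega
  refine ⟨K, b, v, ⟨idx t s₀ s₀, hmemK s₀ h0⟩, hOC, ?_, hxor, ?_, ?_⟩
  · -- (i)
    intro i j
    constructor
    · intro hij
      refine ⟨idx t s₀ (i, j), hmemK (i,j) hij, ?_, ?_⟩
      · exact (congrArg Prod.fst (sel_idx hpos hdet h0 (s := (i,j)) hij)).symm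
      · exact (congrArg Prod.snd (sel_idx hpos hdet h0 (s := (i,j)) hij)).symm
    · rintro ⟨k, hk, rfl, rfl⟩
      exact (hselK k hk).1
  · -- (iii)
    intro hBdd k₀ hk₀
    have hup : ∀ k, k ∈ K → k + 1 ∈ K := by
      intro k hk
      rw [not_bddAbove_iff] at hBdd
      obtain ⟨y, hy, hky⟩ := hBdd k
      exact hOC.out hk hy ⟨by omega, by omega⟩
    have hmem : ∀ m : ℕ, k₀ + m ∈ K := by
      intro m
      induction m with
      | zero => simpa using hk₀
      | succ m ih =>
        have := hup _ ih
        have he : k₀ + ((m : ℤ) + 1) = k₀ + m + 1 := by ring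
        rw [show ((m+1 : ℕ) : ℤ) = (m : ℤ) + 1 by push_cast; ring, he]
        exact this
    constructor
    · -- type (a) occurs
      by_contra hA
      push_neg at hA
      have hstep : ∀ m : ℕ, b (k₀ + m + 1) = b (k₀ + m) ∧ v (k₀ + m) < v (k₀ + m + 1) := by
        intro m
        have hx := hxor (k₀ + m) (hmem m) (hup _ (hmem m))
        rcases hx with ⟨⟨h1, h2⟩, -⟩ | ⟨⟨h1, h2⟩, -⟩
        · exact absurd h2 (hA (k₀+m) (by omega) (hmem m) (hup _ (hmem m)) h1)
        · exact ⟨h1, h2⟩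
      have hbconst : ∀ m : ℕ, b (k₀ + m) = b k₀ := by
        intro m
        induction m with
        | zero => norm_num
        | succ m ih =>
          rw [show ((m+1 : ℕ) : ℤ) = (m : ℤ) + 1 by push_cast; ring,
            show k₀ + ((m:ℤ)+1) = k₀ + m + 1 by ring, (hstep m).1, ih]
      have hdec : ∀ m : ℕ, t (b k₀ - 1) (v (k₀ + m + 1)) ≤ t (b k₀ - 1) (v (k₀ + m)) - 1 := by
        intro m
        have hm := minor_pos hpos hdet (show b k₀ - 1 < b k₀ by omega) (hstep m).2
        have ho1 : t (b k₀) (v (k₀ + m)) = 1 := by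
          have := hones _ (hmem m)
          rwa [← hbconst m]
        have ho2 : t (b k₀) (v (k₀ + m + 1)) = 1 := by
          have := hones _ (hup _ (hmem m))
          have hbv := hbconst (m+1)
          rw [show ((m+1 : ℕ) : ℤ) = (m : ℤ) + 1 by push_cast; ring,
            show k₀ + ((m:ℤ)+1) = k₀ + m + 1 by ring] at hbv
          rwa [← hbv]
        rw [ho1, ho2] at hm
        nlinarith
      have hlin : ∀ m : ℕ, t (b k₀ - 1) (v (k₀ + m)) ≤ t (b k₀ - 1) (v k₀) - m := by
        intro m
        induction m with
        | zero => norm_num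
        | succ m ih =>
          have := hdec m
          rw [show ((m+1 : ℕ) : ℤ) = (m : ℤ) + 1 by push_cast; ring,
            show k₀ + ((m:ℤ)+1) = k₀ + m + 1 by ring]
          push_cast
          omega
      have hfin := hlin (t (b k₀ - 1) (v k₀)).toNat
      have hp1 := hpos (b k₀ - 1) (v (k₀ + ((t (b k₀ - 1) (v k₀)).toNat : ℤ)))
      have hp2 := hpos (b k₀ - 1) (v k₀)
      omega
    · -- type (b) occurs
      by_contra hB
      push_neg at hB
      have hstep : ∀ m : ℕ, b (k₀ + m + 1) < b (k₀ + m) ∧ v (k₀ + m + 1) = v (k₀ + m) := by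
        intro m
        have hx := hxor (k₀ + m) (hmem m) (hup _ (hmem m))
        rcases hx with ⟨⟨h1, h2⟩, -⟩ | ⟨⟨h1, h2⟩, -⟩
        · exact ⟨h1, h2⟩
        · exact absurd h2 (by
            have := hB (k₀+m) (by omega) (hmem m) (hup _ (hmem m)) h1
            omega)
      have hvconst : ∀ m : ℕ, v (k₀ + m) = v k₀ := by
        intro m
        induction m with
        | zero => norm_num
        | succ m ih =>
          rw [show ((m+1 : ℕ) : ℤ) = (m : ℤ) + 1 by push_cast; ring,
            show k₀ + ((m:ℤ)+1) = k₀ + m + 1 by ring, (hstep m).2, ih]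
      have hdec : ∀ m : ℕ, t (b (k₀ + m + 1)) (v k₀ + 1) ≤ t (b (k₀ + m)) (v k₀ + 1) - 1 := by
        intro m
        have hm := minor_pos hpos hdet (hstep m).1 (show v k₀ < v k₀ + 1 by omega)
        have ho1 : t (b (k₀ + m)) (v k₀) = 1 := by
          have := hones _ (hmem m)
          rwa [hvconst m] at this
        have ho2 : t (b (k₀ + m + 1)) (v k₀) = 1 := by
          have := hones _ (hup _ (hmem m))
          have hbv := hvconst (m+1)
          rw [show ((m+1 : ℕ) : ℤ) = (m : ℤ) + 1 by push_cast; ring,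
            show k₀ + ((m:ℤ)+1) = k₀ + m + 1 by ring] at hbv
          rwa [hbv] at this
        rw [ho1, ho2] at hm
        nlinarith
      have hlin : ∀ m : ℕ, t (b (k₀ + m)) (v k₀ + 1) ≤ t (b k₀) (v k₀ + 1) - m := by
        intro m
        induction m with
        | zero => norm_num
        | succ m ih =>
          have := hdec m
          rw [show ((m+1 : ℕ) : ℤ) = (m : ℤ) + 1 by push_cast; ring,
            show k₀ + ((m:ℤ)+1) = k₀ + m + 1 by ring]
          push_cast
          omega
      have hfin := hlin (t (b k₀) (v k₀ + 1)).toNat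
      have hp1 := hpos (b (k₀ + ((t (b k₀) (v k₀ + 1)).toNat : ℤ))) (v k₀ + 1)
      have hp2 := hpos (b k₀) (v k₀ + 1)
      omega
  · -- (iv)
    intro hBdd k₀ hk₀
    have hdn : ∀ k, k ∈ K → k - 1 ∈ K := by
      intro k hk
      rw [not_bddBelow_iff] at hBdd
      obtain ⟨y, hy, hky⟩ := hBdd k
      exact hOC.out hy hk ⟨by omega, by omega⟩
    have hmem : ∀ m : ℕ, k₀ - m ∈ K := by
      intro m
      induction m with
      | zero => simpa using hk₀
      | succ m ih =>
        have := hdn _ ih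
        rw [show ((m+1 : ℕ) : ℤ) = (m : ℤ) + 1 by push_cast; ring,
          show k₀ - ((m:ℤ)+1) = k₀ - m - 1 by ring]
        exact this
    constructor
    · -- type (a) occurs to the left
      by_contra hA
      push_neg at hA
      have hstep : ∀ m : ℕ, b (k₀ - m) = b (k₀ - m - 1) ∧ v (k₀ - m - 1) < v (k₀ - m) := by
        intro m
        have hm1 : k₀ - m - 1 ∈ K := by
          have := hmem (m+1)
          rw [show ((m+1 : ℕ) : ℤ) = (m : ℤ) + 1 by push_cast; ring,
            show k₀ - ((m:ℤ)+1) = k₀ - m - 1 by ring] at this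
          exact this
        have hm0 : (k₀ - m - 1) + 1 ∈ K := by
          rw [show k₀ - (m:ℤ) - 1 + 1 = k₀ - m by ring]
          exact hmem m
        have hx := hxor (k₀ - m - 1) hm1 hm0
        have hAk := hA (k₀ - m - 1) (by omega) hm1 hm0
        rw [show k₀ - (m:ℤ) - 1 + 1 = k₀ - m by ring] at hx hAk
        rcases hx with ⟨⟨h1, h2⟩, -⟩ | ⟨⟨h1, h2⟩, -⟩
        · exact absurd h2 (hAk h1)
        · exact ⟨h1, h2⟩
      have hbconst : ∀ m : ℕ, b (k₀ - m) = b k₀ := by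
        intro m
        induction m with
        | zero => norm_num
        | succ m ih =>
          rw [show ((m+1 : ℕ) : ℤ) = (m : ℤ) + 1 by push_cast; ring,
            show k₀ - ((m:ℤ)+1) = k₀ - m - 1 by ring, ← (hstep m).1, ih]
      have hdec : ∀ m : ℕ, t (b k₀ + 1) (v (k₀ - m - 1)) ≤ t (b k₀ + 1) (v (k₀ - m)) - 1 := by
        intro m
        have hm := minor_pos hpos hdet (show b k₀ < b k₀ + 1 by omega) (hstep m).2
        have ho1 : t (b k₀) (v (k₀ - m)) = 1 := by
          have := hones _ (hmem m)
          rwa [← hbconst m]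
        have ho2 : t (b k₀) (v (k₀ - m - 1)) = 1 := by
          have hmm : k₀ - m - 1 ∈ K := by
            have := hmem (m+1)
            rw [show ((m+1 : ℕ) : ℤ) = (m : ℤ) + 1 by push_cast; ring,
              show k₀ - ((m:ℤ)+1) = k₀ - m - 1 by ring] at this
            exact this
          have := hones _ hmm
          have hbv := hbconst (m+1)
          rw [show ((m+1 : ℕ) : ℤ) = (m : ℤ) + 1 by push_cast; ring,
            show k₀ - ((m:ℤ)+1) = k₀ - m - 1 by ring] at hbv
          rwa [← hbv]
        rw [ho1, ho2] at hm
        nlinarith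
      have hlin : ∀ m : ℕ, t (b k₀ + 1) (v (k₀ - m)) ≤ t (b k₀ + 1) (v k₀) - m := by
        intro m
        induction m with
        | zero => norm_num
        | succ m ih =>
          have := hdec m
          rw [show ((m+1 : ℕ) : ℤ) = (m : ℤ) + 1 by push_cast; ring,
            show k₀ - ((m:ℤ)+1) = k₀ - m - 1 by ring]
          push_cast
          omega
      have hfin := hlin (t (b k₀ + 1) (v k₀)).toNat
      have hp1 := hpos (b k₀ + 1) (v (k₀ - ((t (b k₀ + 1) (v k₀)).toNat : ℤ)))
      have hp2 := hpos (b k₀ + 1) (v k₀)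
      omega
    · -- type (b) occurs to the left
      by_contra hB
      push_neg at hB
      have hstep : ∀ m : ℕ, b (k₀ - m) < b (k₀ - m - 1) ∧ v (k₀ - m - 1) = v (k₀ - m) := by
        intro m
        have hm1 : k₀ - m - 1 ∈ K := by
          have := hmem (m+1)
          rw [show ((m+1 : ℕ) : ℤ) = (m : ℤ) + 1 by push_cast; ring,
            show k₀ - ((m:ℤ)+1) = k₀ - m - 1 by ring] at this
          exact this
        have hm0 : (k₀ - m - 1) + 1 ∈ K := by
          rw [show k₀ - (m:ℤ) - 1 + 1 = k₀ - m by ring]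
          exact hmem m
        have hx := hxor (k₀ - m - 1) hm1 hm0
        have hBk := hB (k₀ - m - 1) (by omega) hm1 hm0
        rw [show k₀ - (m:ℤ) - 1 + 1 = k₀ - m by ring] at hx hBk
        rcases hx with ⟨⟨h1, h2⟩, -⟩ | ⟨⟨h1, h2⟩, -⟩
        · exact ⟨h1, h2.symm⟩
        · exact absurd h2 (by
            have := hBk h1
            omega)
      have hvconst : ∀ m : ℕ, v (k₀ - m) = v k₀ := by
        intro m
        induction m with
        | zero => norm_num
        | succ m ih =>
          rw [show ((m+1 : ℕ) : ℤ) = (m : ℤ) + 1 by push_cast; ring,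
            show k₀ - ((m:ℤ)+1) = k₀ - m - 1 by ring, (hstep m).2, ih]
      have hdec : ∀ m : ℕ, t (b (k₀ - m - 1)) (v k₀ - 1) ≤ t (b (k₀ - m)) (v k₀ - 1) - 1 := by
        intro m
        have hm := minor_pos hpos hdet (hstep m).1 (show v k₀ - 1 < v k₀ by omega)
        have ho1 : t (b (k₀ - m)) (v k₀) = 1 := by
          have := hones _ (hmem m)
          rwa [hvconst m] at this
        have ho2 : t (b (k₀ - m - 1)) (v k₀) = 1 := by
          have hmm : k₀ - m - 1 ∈ K := by
            have := hmem (m+1)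
            rw [show ((m+1 : ℕ) : ℤ) = (m : ℤ) + 1 by push_cast; ring,
              show k₀ - ((m:ℤ)+1) = k₀ - m - 1 by ring] at this
            exact this
          have := hones _ hmm
          have hbv := hvconst (m+1)
          rw [show ((m+1 : ℕ) : ℤ) = (m : ℤ) + 1 by push_cast; ring,
            show k₀ - ((m:ℤ)+1) = k₀ - m - 1 by ring] at hbv
          rwa [hbv] at this
        rw [ho1, ho2] at hm
        nlinarith
      have hlin : ∀ m : ℕ, t (b (k₀ - m)) (v k₀ - 1) ≤ t (b k₀) (v k₀ - 1) - m := by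
        intro m
        induction m with
        | zero => norm_num
        | succ m ih =>
          have := hdec m
          rw [show ((m+1 : ℕ) : ℤ) = (m : ℤ) + 1 by push_cast; ring,
            show k₀ - ((m:ℤ)+1) = k₀ - m - 1 by ring]
          push_cast
          omega
      have hfin := hlin (t (b k₀) (v k₀ - 1)).toNat
      have hp1 := hpos (b (k₀ - ((t (b k₀) (v k₀ - 1)).toNat : ℤ))) (v k₀ - 1)
      have hp2 := hpos (b k₀) (v k₀ - 1)
      omega
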